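/- There exists a flow f that is a cycle (f² ≠ 0) but is nilpotent: specifically f = (x • c) ⊣ (d • x) satisfies f² ≠ 0 and f³ = 0. -/

import Mathlib

/-! First-order terms over variables `ℕ` and function symbols `ℕ` (each symbol
used with the arity of its argument list), substitutions, unification, and
flows `t ⊣ u` (with `Var(t) ⊆ Var(u)`, considered up to renaming). -/

/-- First-order terms. -/
inductive Term where
  | var : ℕ → Term
  | fn : ℕ → List Term → Term

mutual
/-- Apply a substitution to a term. -/
def Term.subst (θ : ℕ → Term) : Term → Term
  | .var n => θ n
  | .fn f ts => .fn f (Term.substList θ ts)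
/-- Apply a substitution to a list of terms. -/
def Term.substList (θ : ℕ → Term) : List Term → List Term
  | [] => []
  | t :: ts => Term.subst θ t :: Term.substList θ ts
end

mutual
/-- Variables occurring in a term. -/
def Term.vars : Term → Set ℕ
  | .var n => {n}
  | .fn _ ts => Term.varsList ts
/-- Variables occurring in a list of terms. -/
def Term.varsList : List Term → Set ℕ
  | [] => ∅
  | t :: ts => Term.vars t ∪ Term.varsList ts
end

/-- `θ` is a unifier of `t` and `u`. -/
def IsUnifier (θ : ℕ → Term) (t u : Term) : Prop := t.subst θ = u.subst θ

/-- `θ'` is an instance of `θ` (factors through `θ`). -/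
def InstanceOf (θ' θ : ℕ → Term) : Prop := ∃ ρ, ∀ n, θ' n = (θ n).subst ρ

/-- `θ` is a most general unifier of `t` and `u`. -/
def IsMGU (θ : ℕ → Term) (t u : Term) : Prop :=
  IsUnifier θ t u ∧ ∀ θ', IsUnifier θ' t u → InstanceOf θ' θ

/-- Apply a renaming (a bijection on variables) to a term. -/
def Term.rename (α : ℕ ≃ ℕ) (t : Term) : Term := t.subst fun n => .var (α n)

/-- Two terms are matchable if renamings of them with disjoint sets of
variables are unifiable. -/
def Matchable (t u : Term) : Prop :=
  ∃ α β : ℕ ≃ ℕ, Disjoint (t.rename α).vars (u.rename β).vars ∧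
    ∃ θ, IsUnifier θ (t.rename α) (u.rename β)

/-- A flow `t ⊣ u` with `Var(t) ⊆ Var(u)`. -/
structure RFlow where
  lhs : Term
  rhs : Term
  sub : lhs.vars ⊆ rhs.vars

instance : Inhabited RFlow := ⟨⟨.var 0, .var 0, Set.Subset.rfl⟩⟩

/-- Equality of flows up to renaming. -/
def FlowEquiv (f g : RFlow) : Prop :=
  ∃ α : ℕ ≃ ℕ, g.lhs = f.lhs.rename α ∧ g.rhs = f.rhs.rename α

/-- `r` is a resolution product of `f` and `g`: after renaming `g` apart from
`f`, the MGU `θ` of `f`'s right term and `g`'s left term exists and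
`r = θ(f.lhs) ⊣ θ(g.rhs)`. -/
def FlowCompRel (f g r : RFlow) : Prop :=
  ∃ g' : RFlow, FlowEquiv g g' ∧ Disjoint f.rhs.vars g'.lhs.vars ∧
    ∃ θ, IsMGU θ f.rhs g'.lhs ∧
      r.lhs = f.lhs.subst θ ∧ r.rhs = g'.rhs.subst θ

open Classical in
/-- The product of flows (`none` = undefined = 0). -/
noncomputable def fcomp (f g : RFlow) : Option RFlow :=
  if h : ∃ r, FlowCompRel f g r then some h.choose else none

/-- Product extended to possibly-undefined flows. -/
noncomputable def fcompO (a b : Option RFlow) : Option RFlow :=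
  a.bind fun f => b.bind fun g => fcomp f g

/-- Equality up to renaming of possibly-undefined flows. -/
def OEquiv (a b : Option RFlow) : Prop :=
  (a = none ∧ b = none) ∨ ∃ f g, a = some f ∧ b = some g ∧ FlowEquiv f g

/-- The binary function symbol `•`. -/
def bul (a b : Term) : Term := .fn 0 [a, b]

/-- The constant `c`. -/
def cC : Term := .fn 1 []

/-- The constant `d`. -/
def cD : Term := .fn 2 []

/-- The flow `(x • c) ⊣ (d • x)`. -/
def fCyc : RFlow :=
  ⟨bul (.var 0) cC, bul cD (.var 0), by
    simp [bul, cC, cD, Term.vars, Term.varsList]⟩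

/-- The renamed copy of `fCyc` with variable 1. -/
def gCyc : RFlow :=
  ⟨bul (.var 1) cC, bul cD (.var 1), by
    simp [bul, cC, cD, Term.vars, Term.varsList]⟩

/-- The substitution 0 ↦ c, 1 ↦ d. -/
noncomputable def θ₀ : ℕ → Term := fun n => if n = 0 then cC else if n = 1 then cD else .var n

lemma exists_comp : ∃ r, FlowCompRel fCyc fCyc r := by
  refine ⟨⟨bul cC cC, bul cD cD, by simp [bul, cC, cD, Term.vars, Term.varsList]⟩,
    gCyc, ⟨Equiv.swap 0 1, ?_, ?_⟩, ?_, θ₀, ⟨?_, ?_⟩, ?_, ?_⟩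
  · simp [gCyc, fCyc, Term.rename, bul, cC, Term.subst, Term.substList]
  · simp [gCyc, fCyc, Term.rename, bul, cD, Term.subst, Term.substList]
  · simp [gCyc, fCyc, bul, cC, cD, Term.vars, Term.varsList]
  · simp [IsUnifier, fCyc, gCyc, bul, cC, cD, Term.subst, Term.substList, θ₀]
  · intro θ' hθ'
    simp only [IsUnifier, fCyc, gCyc, bul, cC, cD, Term.subst, Term.substList] at hθ'
    injection hθ' with _ h
    injection h with h1 h
    injection h with h2 _
    refine ⟨θ', fun n => ?_⟩
    simp only [θ₀]
    split
    · next h => subst h; simp only [cC, Term.subst, Term.substList]; exact h2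
    split
    · next h => subst h; simp only [cD, Term.subst, Term.substList]; exact h1.symm
    · simp [Term.subst]
  · simp [fCyc, bul, cC, Term.subst, Term.substList, θ₀]
  · simp [gCyc, bul, cD, Term.subst, Term.substList, θ₀]

lemma comp_rhs (r : RFlow) (h : FlowCompRel fCyc fCyc r) : r.rhs = bul cD cD := by
  obtain ⟨g', ⟨α, hl, hr⟩, _, θ, ⟨hu, _⟩, _, hrr⟩ := h
  simp only [fCyc, Term.rename, bul, cC, cD, Term.subst, Term.substList] at hl hr
  simp only [IsUnifier, fCyc, hl, bul, cC, cD, Term.subst, Term.substList] at hu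
  injection hu with _ h
  injection h with h1 h
  injection h with h2 _
  rw [hrr, hr]
  simp only [bul, cD, Term.subst, Term.substList, ← h1]

lemma no_third (r : RFlow) (h : FlowCompRel fCyc fCyc r) : ¬ ∃ s, FlowCompRel r fCyc s := by
  rintro ⟨s, g', ⟨α, hl, _⟩, _, θ, ⟨hu, _⟩, _⟩
  have hr := comp_rhs r h
  simp only [fCyc, Term.rename, bul, cC, cD, Term.subst, Term.substList] at hl
  simp only [IsUnifier, hr, hl, bul, cC, cD, Term.subst, Term.substList] at hu
  injection hu with _ h'
  injection h' with _ h'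
  injection h' with h' _
  injection h' with h'' _
  exact absurd h'' (by decide)

/-- the flow `f = (x • c) ⊣ (d • x)` is a cycle (`f² ≠ 0`) yet
nilpotent (`f³ = 0`). -/
theorem cycle_but_nilpotent :
    fcomp fCyc fCyc ≠ none ∧ fcompO (fcomp fCyc fCyc) (some fCyc) = none := by
  have he := exists_comp
  have h1 : fcomp fCyc fCyc = some he.choose := dif_pos he
  refine ⟨by simp [h1], ?_⟩
  have hc : FlowCompRel fCyc fCyc he.choose := he.choose_spec
  simp only [h1, fcompO, Option.bind]
  exact dif_neg (no_third _ hc)
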